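/- Let η be a Toeplitz array with period structure (Γ_n) satisfying J(n) ⊆ Per(η,Γ_{n+1}) \ Per(η,Γ_n) for all n, and let d_n = |D_n ∩ Per(η,Γ_n)| / |D_n|. Then for each n ∈ ℕ, 1 - d_{n+1} = (1 - 1/|D_1|) · ∏_{j=1}^{n} (1 - |D_j|/|D_{j+1}|). -/

import Mathlib

open Pointwise

/-- `Per(η, Γ, α)`: positions `g` such that `η` equals `α` on the whole coset `Γ g`. -/
def PerA {G A : Type*} [Group G] (η : G → A) (Γ : Subgroup G) (α : A) : Set G :=
  {g | ∀ γ ∈ Γ, η (γ * g) = α}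

/-- `Per(η, Γ) = ⋃_α Per(η, Γ, α)`: positions at which `η` is `Γ`-periodic. -/
def Per {G A : Type*} [Group G] (η : G → A) (Γ : Subgroup G) : Set G :=
  ⋃ α, PerA η Γ α

/-- `Γ` is an essential group of periods of `η`: whenever
`Per(η,Γ,α) ⊆ Per(σ^g η, Γ, α)` for all symbols `α`, we must have `g ∈ Γ`. -/
def IsEssential {G A : Type*} [Group G] (η : G → A) (Γ : Subgroup G) : Prop :=
  ∀ g : G, (∀ α, PerA η Γ α ⊆ PerA (fun h => η (g⁻¹ * h)) Γ α) → g ∈ Γ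

lemma Per_antitone {G A : Type*} [Group G] (η : G → A) {Γ Γ' : Subgroup G} (h : Γ' ≤ Γ) :
    Per η Γ ⊆ Per η Γ' := by
  intro g hg
  rw [Per, Set.mem_iUnion] at hg ⊢
  obtain ⟨α, hα⟩ := hg
  exact ⟨α, fun γ hγ => hα γ (h hγ)⟩

lemma Per_mul_right {G A : Type*} [Group G] (η : G → A) {Γ : Subgroup G} (hn : Γ.Normal)
    {g δ : G} (hg : g ∈ Per η Γ) (hδ : δ ∈ Γ) : g * δ ∈ Per η Γ := by
  rw [Per, Set.mem_iUnion] at hg ⊢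
  obtain ⟨α, hα⟩ := hg
  refine ⟨α, fun γ hγ => ?_⟩
  have h1 : g * δ * g⁻¹ ∈ Γ := hn.conj_mem δ hδ g
  have := hα (γ * (g * δ * g⁻¹)) (Γ.mul_mem hγ h1)
  simpa [mul_assoc] using this

/-- If `J n ⊆ Per(η,Γ (n+1)) \\ Per(η,Γ n)` for all `n`, then with `d_n = |D n ∩ Per(η,Γ n)| / |D n|`, one has `1 - d (n+1) = (1 - 1/|D 1|) ∏_{j=1}^{n} (1 - |D j|/|D (j+1)|)`. -/
theorem density_product_formula {G A : Type*} [Group G] [Fintype A] (hA : 2 ≤ Fintype.card A)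
    (Γ : ℕ → Subgroup G)
    (hnorm : ∀ n, (Γ n).Normal)
    (hfin : ∀ n, (Γ n).FiniteIndex)
    (hdec : ∀ n, Γ (n + 1) ≤ Γ n)
    (D : ℕ → Finset G)
    (hD0 : D 0 = {1})
    (hDone : ∀ n, (1 : G) ∈ D n)
    (hDmono : ∀ n, D n ⊆ D (n + 1))
    (hfund : ∀ n, ∀ g : G, ∃! d, d ∈ D n ∧ g⁻¹ * d ∈ Γ n)
    (hcompat : ∀ i j, i < j →
      (D j : Set G) = ⋃ v ∈ (D j : Set G) ∩ (Γ i : Set G), v • (D i : Set G))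
    (J : ℕ → Set G)
    (hJ : ∀ n, J n = (D n : Set G) \ ⋃ i ∈ Finset.range n, J i * (Γ (i + 1) : Set G))
    (η : G → A)
    (hToe : ∀ g : G, ∃ n, g ∈ Per η (Γ n))
    (hess : ∀ n, IsEssential η (Γ n))
    (hJper : ∀ n : ℕ, J n ⊆ Per η (Γ (n + 1)) \ Per η (Γ n))
    (d : ℕ → ℝ)
    (hd : ∀ n, d n = (Nat.card ((D n : Set G) ∩ Per η (Γ n) : Set G) : ℝ) / ((D n).card : ℝ))
    :
    ∀ n : ℕ, 1 - d (n + 1) =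
      (1 - 1 / ((D 1).card : ℝ)) * ∏ j ∈ Finset.Icc 1 n, (1 - ((D j).card : ℝ) / ((D (j + 1)).card : ℝ)) := by
  classical
  -- the union sets
  set U : ℕ → Set G := fun n => ⋃ i ∈ Finset.range n, J i * (Γ (i + 1) : Set G) with hU
  -- chain of subgroups
  have hchain : ∀ {m n : ℕ}, m ≤ n → Γ n ≤ Γ m := by
    intro m n h
    induction h with
    | refl => exact le_rfl
    | step h ih => exact (hdec _).trans ih
  -- J n avoids U n
  have hJU : ∀ n, ∀ g ∈ J n, g ∉ U n := by
    intro n g hg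
    rw [hJ n] at hg
    exact hg.2
  have hJD : ∀ n, J n ⊆ (D n : Set G) := by
    intro n g hg
    rw [hJ n] at hg
    exact hg.1
  -- U n ⊆ Per η (Γ n)
  have hUper : ∀ n, U n ⊆ Per η (Γ n) := by
    intro n g hg
    rw [hU] at hg
    simp only [Set.mem_iUnion] at hg
    obtain ⟨i, hi, hg⟩ := hg
    obtain ⟨j, hj, γ, hγ, rfl⟩ := hg
    have h1 : j ∈ Per η (Γ (i + 1)) := (hJper i hj).1
    have h2 : j * γ ∈ Per η (Γ (i + 1)) := Per_mul_right η (hnorm (i + 1)) h1 hγ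
    exact Per_antitone η (hchain (Finset.mem_range.1 hi)) h2
  -- key identity
  have hInter : ∀ n, (D n : Set G) ∩ Per η (Γ n) = (D n : Set G) ∩ U n := by
    intro n
    ext g
    constructor
    · rintro ⟨hgD, hgP⟩
      refine ⟨hgD, ?_⟩
      by_contra h
      have : g ∈ J n := by rw [hJ n]; exact ⟨hgD, h⟩
      exact (hJper n this).2 hgP
    · rintro ⟨hgD, hgU⟩
      exact ⟨hgD, hUper n hgU⟩
  -- invariance of U n
  have hUinv_r : ∀ n, ∀ g ∈ U n, ∀ δ ∈ Γ n, g * δ ∈ U n := by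
    intro n g hg δ hδ
    rw [hU] at hg ⊢
    simp only [Set.mem_iUnion] at hg ⊢
    obtain ⟨i, hi, j, hj, γ, hγ, rfl⟩ := hg
    exact ⟨i, hi, j, hj, γ * δ, (Γ (i + 1)).mul_mem hγ (hchain (Finset.mem_range.1 hi) hδ),
      (mul_assoc _ _ _).symm⟩
  have hUinv_l : ∀ n, ∀ δ ∈ Γ n, ∀ g ∈ U n, δ * g ∈ U n := by
    intro n δ hδ g hg
    rw [hU] at hg ⊢
    simp only [Set.mem_iUnion] at hg ⊢
    obtain ⟨i, hi, j, hj, γ, hγ, rfl⟩ := hg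
    have hδ' : δ ∈ Γ (i + 1) := hchain (Finset.mem_range.1 hi) hδ
    refine ⟨i, hi, j, hj, (j⁻¹ * δ * j) * γ,
      (Γ (i + 1)).mul_mem ?_ hγ, by group⟩
    have := (hnorm (i + 1)).conj_mem δ hδ' j⁻¹
    simpa using this
  -- counting along the coset decomposition
  have hcount : ∀ n (S : Set G), (∀ δ ∈ Γ n, ∀ g ∈ S, δ * g ∈ S) →
      ((D (n + 1)).filter (· ∈ S)).card =
        ((D (n + 1)).filter (· ∈ (Γ n : Set G))).card * ((D n).filter (· ∈ S)).card := by
    intro n S hS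
    set V : Finset G := (D (n + 1)).filter (· ∈ (Γ n : Set G)) with hV
    have hdecomp : (D (n + 1)).filter (· ∈ S) =
        V.biUnion (fun v => ((D n).filter (· ∈ S)).image (v * ·)) := by
      ext x
      simp only [Finset.mem_filter, Finset.mem_biUnion, Finset.mem_image, hV]
      constructor
      · rintro ⟨hxD, hxS⟩
        have hx : x ∈ (D (n + 1) : Set G) := hxD
        rw [hcompat n (n + 1) (Nat.lt_succ_self n)] at hx
        simp only [Set.mem_iUnion] at hx
        obtain ⟨v, ⟨hvD, hvΓ⟩, hx⟩ := hx
        obtain ⟨y, hy, rfl⟩ := hx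
        refine ⟨v, ⟨hvD, hvΓ⟩, y, ⟨hy, ?_⟩, rfl⟩
        have := hS v⁻¹ ((Γ n).inv_mem hvΓ) (v • y) hxS
        simpa using this
      · rintro ⟨v, ⟨hvD, hvΓ⟩, y, ⟨hyD, hyS⟩, rfl⟩
        refine ⟨?_, hS v hvΓ y hyS⟩
        have : v • y ∈ (D (n + 1) : Set G) := by
          rw [hcompat n (n + 1) (Nat.lt_succ_self n)]
          simp only [Set.mem_iUnion]
          exact ⟨v, ⟨hvD, hvΓ⟩, ⟨y, hyD, rfl⟩⟩
        simpa using this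
    rw [hdecomp, Finset.card_biUnion, Finset.sum_congr rfl
      (fun v _ => Finset.card_image_of_injective _ (mul_right_injective v)),
      Finset.sum_const, smul_eq_mul]
    · intro v hv w hw hvw
      simp only [Finset.mem_coe, Finset.mem_filter, hV] at hv hw
      show Disjoint _ _
      rw [Finset.disjoint_left]
      rintro x hx hx'
      simp only [Finset.mem_image, Finset.mem_filter] at hx hx'
      obtain ⟨y, ⟨hyD, _⟩, rfl⟩ := hx
      obtain ⟨z, ⟨hzD, _⟩, hz⟩ := hx'
      -- v * y = w * z with v,w ∈ Γ n, y,z ∈ D n  ⇒ y = z, then v = w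
      obtain ⟨e, -, he⟩ := hfund n (v * y)
      have h1 : (v * y)⁻¹ * y ∈ Γ n := by
        have : (v * y)⁻¹ * y = y⁻¹ * v⁻¹ * y := by group
        rw [this]
        have := (hnorm n).conj_mem v⁻¹ ((Γ n).inv_mem hv.2) y⁻¹
        simpa [mul_assoc] using this
      have h2 : (v * y)⁻¹ * z ∈ Γ n := by
        rw [← hz]
        have : (w * z)⁻¹ * z = z⁻¹ * w⁻¹ * z := by group
        rw [this]
        have := (hnorm n).conj_mem w⁻¹ ((Γ n).inv_mem hw.2) z⁻¹
        simpa [mul_assoc] using this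
      have hy' := he y ⟨hyD, h1⟩
      have hz' := he z ⟨hzD, h2⟩
      have hyz : y = z := hy'.trans hz'.symm
      subst hyz
      exact hvw (mul_right_cancel hz.symm)
    -- abbreviations
  set c : ℕ → ℕ := fun n => ((D n).filter (· ∈ U n)).card with hc
  set k : ℕ → ℕ := fun n => ((D (n + 1)).filter (· ∈ (Γ n : Set G))).card with hk
  -- Nat.card of the periodic part equals c n
  have hcP : ∀ n, Nat.card ((D n : Set G) ∩ Per η (Γ n) : Set G) = c n := by
    intro n
    rw [Nat.card_coe_set_eq, hInter n]
    show _ = ((D n).filter (· ∈ U n)).card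
    rw [← Set.ncard_coe_finset]
    congr 1
    ext g
    simp
  -- |D (n+1)| = k n * |D n|
  have hDcard : ∀ n, (D (n + 1)).card = k n * (D n).card := by
    intro n
    have h := hcount n Set.univ (fun _ _ _ _ => Set.mem_univ _)
    simp only [Set.mem_univ, Finset.filter_true] at h
    exact h
  -- c 0 = 0
  have hc0 : c 0 = 0 := by
    rw [hc]
    simp [hU]
  -- U 1 = Γ 1
  have hJ0 : J 0 = {1} := by
    rw [hJ 0, hD0]
    simp
  have hU1 : U 1 = (Γ 1 : Set G) := by
    rw [hU]
    simp [hJ0, Finset.range_one]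
  -- c 1 = 1
  have hc1 : c 1 = 1 := by
    rw [hc]
    simp only [hU1]
    rw [Finset.card_eq_one]
    refine ⟨1, ?_⟩
    ext g
    simp only [Finset.mem_filter, Finset.mem_singleton]
    constructor
    · rintro ⟨hgD, hgΓ⟩
      obtain ⟨e, -, he⟩ := hfund 1 1
      have h1 := he g ⟨hgD, by simpa using hgΓ⟩
      have h2 := he 1 ⟨hDone 1, by simpa using (Γ 1).one_mem⟩
      rw [h1, h2]
    · rintro rfl
      exact ⟨hDone 1, (Γ 1).one_mem⟩
  -- |J n ∩ D n| = |D n| - c n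
  have hJcard : ∀ n, ((D n).filter (· ∈ J n)).card = (D n).card - c n := by
    intro n
    have : (D n).filter (· ∈ J n) = (D n).filter (fun g => ¬ g ∈ U n) := by
      apply Finset.filter_congr
      intro g hg
      constructor
      · exact fun h => hJU n g h
      · intro h
        rw [hJ n]
        exact ⟨hg, h⟩
    rw [this, Finset.filter_not, Finset.card_sdiff_of_subset (Finset.filter_subset _ _)]
  -- |D(n+1) ∩ J n Γ_{n+1}| = |J n|
  have hJtrans : ∀ n, ((D (n + 1)).filter (· ∈ J n * (Γ (n + 1) : Set G))).card =
      ((D n).filter (· ∈ J n)).card := by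
    intro n
    refine (Finset.card_bij
      (fun j _ => (hfund (n + 1) j).choose) ?_ ?_ ?_).symm
    · intro j hj
      simp only [Finset.mem_filter] at hj ⊢
      obtain ⟨⟨hd1, hd2⟩, -⟩ := (hfund (n + 1) j).choose_spec
      refine ⟨hd1, ?_⟩
      exact ⟨j, hj.2, j⁻¹ * (hfund (n + 1) j).choose, hd2, by group⟩
    · intro j hj j' hj' hEq
      simp only [Finset.mem_filter] at hj hj'
      obtain ⟨⟨hd1, hd2⟩, hu⟩ := (hfund (n + 1) j).choose_spec
      have hEq' : (hfund (n + 1) j').choose = (hfund (n + 1) j).choose := by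
        exact hEq.symm
      have hd2' : j'⁻¹ * (hfund (n + 1) j).choose ∈ Γ (n + 1) := by
        rw [← hEq']
        exact ((hfund (n + 1) j').choose_spec).1.2
      have hjj' : j⁻¹ * j' ∈ Γ (n + 1) := by
        have : j⁻¹ * j' = (j⁻¹ * (hfund (n + 1) j).choose) * (j'⁻¹ * (hfund (n + 1) j).choose)⁻¹ := by
          group
        rw [this]
        exact (Γ (n + 1)).mul_mem hd2 ((Γ (n + 1)).inv_mem hd2')
      have h1 := hu j ⟨hDmono n (Finset.mem_coe.1 (hJD n hj.2)), by simpa using (Γ (n + 1)).one_mem⟩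
      have h2 := hu j' ⟨hDmono n (Finset.mem_coe.1 (hJD n hj'.2)), hjj'⟩
      rw [h1, h2]
    · intro g hg
      simp only [Finset.mem_filter] at hg
      obtain ⟨hgD, j, hjJ, γ, hγ, rfl⟩ := hg
      have hjD : j ∈ (D n).filter (· ∈ J n) :=
        Finset.mem_filter.2 ⟨hJD n hjJ, hjJ⟩
      refine ⟨j, hjD, ?_⟩
      obtain ⟨⟨hd1, hd2⟩, hu⟩ := (hfund (n + 1) j).choose_spec
      exact (hu (j * γ) ⟨hgD, by simpa using hγ⟩).symm
  -- recursion for c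
  have hcrec : ∀ n, c (n + 1) = k n * c n + ((D n).card - c n) := by
    intro n
    have hsplit : (D (n + 1)).filter (· ∈ U (n + 1)) =
        (D (n + 1)).filter (· ∈ U n) ∪ (D (n + 1)).filter (· ∈ J n * (Γ (n + 1) : Set G)) := by
      rw [← Finset.filter_or]
      apply Finset.filter_congr
      intro g hg
      simp only [eq_iff_iff, hU]
      rw [Finset.range_add_one, Finset.set_biUnion_insert, Set.mem_union]
      tauto
    have hdisj : Disjoint ((D (n + 1)).filter (· ∈ U n))
        ((D (n + 1)).filter (· ∈ J n * (Γ (n + 1) : Set G))) := by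
      rw [Finset.disjoint_left]
      rintro x hx hx'
      simp only [Finset.mem_filter] at hx hx'
      obtain ⟨j, hjJ, γ, hγ, rfl⟩ := hx'.2
      have : j ∈ U n := by
        have := hUinv_r n (j * γ) hx.2 γ⁻¹ ((hdec n) ((Γ (n + 1)).inv_mem hγ))
        simpa using this
      exact hJU n j hjJ this
    have := hcount n (U n) (hUinv_l n)
    calc c (n + 1) = ((D (n + 1)).filter (· ∈ U n)).card
          + ((D (n + 1)).filter (· ∈ J n * (Γ (n + 1) : Set G))).card := by
          rw [hc]; simp only; rw [hsplit, Finset.card_union_of_disjoint hdisj]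
      _ = k n * c n + ((D n).card - c n) := by
          rw [this, hJtrans n, hJcard n]
  -- positivity and bounds
  have hDpos : ∀ n, 0 < (D n).card := fun n => Finset.card_pos.2 ⟨1, hDone n⟩
  have hkpos : ∀ n, 0 < k n := by
    intro n
    rw [hk]
    exact Finset.card_pos.2 ⟨1, Finset.mem_filter.2 ⟨hDone (n + 1), (Γ n).one_mem⟩⟩
  have hcle : ∀ n, c n ≤ (D n).card := fun n => Finset.card_filter_le _ _
  -- d in terms of c
  have hdc : ∀ n, d n = (c n : ℝ) / ((D n).card : ℝ) := by
    intro n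
    rw [hd n, hcP n]
  -- the step identity over ℝ
  have hstep : ∀ n, 1 ≤ n → 1 - d (n + 1) = (1 - d n) * (1 - ((D n).card : ℝ) / ((D (n + 1)).card : ℝ)) := by
    intro n _
    have hN : ((D n).card : ℝ) ≠ 0 := Nat.cast_ne_zero.2 (hDpos n).ne'
    have hK : ((k n : ℝ)) ≠ 0 := Nat.cast_ne_zero.2 (hkpos n).ne'
    rw [hdc, hdc, hcrec n, hDcard n]
    push_cast [Nat.cast_sub (hcle n)]
    field_simp
    ring
  -- base case
  have hbase : 1 - d 1 = 1 - 1 / ((D 1).card : ℝ) := by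
    rw [hdc 1, hc1]
    norm_num
  intro n
  induction n with
  | zero => simpa using hbase
  | succ n ih =>
      rw [Finset.prod_Icc_succ_top (Nat.le_add_left 1 n), ← mul_assoc, ← ih,
        hstep (n + 1) (Nat.le_add_left 1 n)]
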